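/- Let (X, λ) be a finite measure space, φ₁,…,φ_{2n} : X → ℂ integrable functions, and ε : X × X → ℂ a bounded antisymmetric kernel (ε(x,y) = -ε(y,x)). Define the 2n×2n antisymmetric matrix M by M_{jk} = ∫∫ φ_j(x) ε(x,y) φ_k(y) dλ(x) dλ(y). Then ∫_{X^{2n}} det(φ_j(x_k))_{j,k=1}^{2n} · pf(ε(x_j,x_k))_{j,k=1}^{2n} dλ^{⊗2n}(x₁,…,x_{2n}) = (2n)! · pf(M). -/

import Mathlib

open Finset Matrix MeasureTheory

/-- The Pfaffian of a `2n × 2n` matrix, defined as the signed sum over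
partitions of `{0, …, 2n-1}` into pairs `{i₁,j₁},…,{iₙ,jₙ}` with `iₖ < jₖ`. -/
def pf {R : Type*} [CommRing R] {n : ℕ} (A : Matrix (Fin (2 * n)) (Fin (2 * n)) R) : R :=
  ∑ σ ∈ Finset.univ.filter (fun σ : Equiv.Perm (Fin (2 * n)) =>
      (∀ i : Fin n, σ ⟨2 * i, by have := i.isLt; omega⟩ < σ ⟨2 * i + 1, by have := i.isLt; omega⟩) ∧
      (∀ i j : Fin n, i < j →
        σ ⟨2 * i, by have := i.isLt; omega⟩ < σ ⟨2 * j, by have := j.isLt; omega⟩)),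
    (Equiv.Perm.sign σ : ℤ) •
      ∏ i : Fin n, A (σ ⟨2 * i, by have := i.isLt; omega⟩) (σ ⟨2 * i + 1, by have := i.isLt; omega⟩)

open Equiv
namespace PFAux
variable {n : ℕ}
def ev (n : ℕ) (i : Fin n) : Fin (2 * n) := ⟨2 * i, by have := i.isLt; omega⟩
def od (n : ℕ) (i : Fin n) : Fin (2 * n) := ⟨2 * i + 1, by have := i.isLt; omega⟩
def pairS (n : ℕ) : Finset (Equiv.Perm (Fin (2 * n))) :=
  Finset.univ.filter (fun σ : Equiv.Perm (Fin (2 * n)) =>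
      (∀ i : Fin n, σ (ev n i) < σ (od n i)) ∧
      (∀ i j : Fin n, i < j → σ (ev n i) < σ (ev n j)))
lemma mem_pairS {σ : Equiv.Perm (Fin (2 * n))} :
    σ ∈ pairS n ↔ (∀ i : Fin n, σ (ev n i) < σ (od n i)) ∧
      (∀ i j : Fin n, i < j → σ (ev n i) < σ (ev n j)) := by simp [pairS]
def E (n : ℕ) : Fin n × Fin 2 ≃ Fin (2 * n) where
  toFun x := ⟨2 * x.1 + x.2, by have := x.1.isLt; have := x.2.isLt; omega⟩
  invFun k := (⟨k / 2, by have := k.isLt; omega⟩, ⟨k % 2, by omega⟩)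
  left_inv := by rintro ⟨i, b⟩; have hb := b.isLt; ext <;> simp <;> omega
  right_inv := by rintro k; have hk := k.isLt; ext; simp; omega
lemma E_apply_zero (i : Fin n) : E n (i, 0) = ev n i := by simp [E, ev, Fin.ext_iff]
lemma E_apply_one (i : Fin n) : E n (i, 1) = od n i := by simp [E, od, Fin.ext_iff]
def flip2 (b : Bool) : Equiv.Perm (Fin 2) := if b then Equiv.swap 0 1 else Equiv.refl _
def ψ (p : Equiv.Perm (Fin n)) (s : Fin n → Bool) : Equiv.Perm (Fin (2 * n)) :=
  (E n).permCongr (Equiv.prodShear p (fun i => flip2 (s i)))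
lemma ψ_apply_E (p : Equiv.Perm (Fin n)) (s : Fin n → Bool) (i : Fin n) (b : Fin 2) :
    ψ p s (E n (i, b)) = E n (p i, flip2 (s i) b) := by simp [ψ, Equiv.permCongr_apply]
lemma ψ_ev (p : Equiv.Perm (Fin n)) (s : Fin n → Bool) (i : Fin n) :
    ψ p s (ev n i) = if s i then od n (p i) else ev n (p i) := by
  rw [← E_apply_zero, ψ_apply_E]
  cases h : s i <;> simp [flip2, E_apply_zero, E_apply_one]
lemma ψ_od (p : Equiv.Perm (Fin n)) (s : Fin n → Bool) (i : Fin n) :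
    ψ p s (od n i) = if s i then ev n (p i) else od n (p i) := by
  rw [← E_apply_one, ψ_apply_E]
  cases h : s i <;> simp [flip2, E_apply_zero, E_apply_one]
lemma sign_ψ (p : Equiv.Perm (Fin n)) (s : Fin n → Bool) :
    Equiv.Perm.sign (ψ p s) = ∏ i, (if s i then (-1 : ℤˣ) else 1) := by
  have hdecomp : Equiv.prodShear p (fun i => flip2 (s i)) =
      (Equiv.prodCongrLeft (fun _ : Fin 2 => p)) * (Equiv.prodCongrRight (fun i => flip2 (s i))) := by
    ext ⟨i, b⟩ : 1; rfl
  rw [ψ, Equiv.Perm.sign_permCongr, hdecomp, _root_.map_mul,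
    Equiv.Perm.sign_prodCongrLeft, Equiv.Perm.sign_prodCongrRight]
  have h1 : ∏ _k : Fin 2, Equiv.Perm.sign p = 1 := by simp [Fin.prod_univ_two, ← pow_two]
  rw [h1, one_mul]
  congr 1; ext i
  cases h : s i <;> simp [flip2, Equiv.Perm.sign_swap]

-- NEW PART
def Φ (x : {σ // σ ∈ pairS n} × Equiv.Perm (Fin n) × (Fin n → Bool)) :
    Equiv.Perm (Fin (2 * n)) := (x.1 : Equiv.Perm (Fin (2 * n))) * ψ x.2.1 x.2.2

lemma strictMono_perm_eq_one {m : ℕ} {q : Equiv.Perm (Fin m)} (h : StrictMono (q : Fin m → Fin m)) :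
    q = 1 := by
  have hinv : StrictMono (fun i => q⁻¹ i : Fin m → Fin m) := by
    intro a b hab
    simp only []
    by_contra hle
    push_neg at hle
    have := h.monotone hle
    simp only [← Equiv.Perm.mul_apply, mul_inv_cancel, Equiv.Perm.one_apply] at this
    exact absurd hab (not_lt.2 this)
  ext i
  have hwf : WellFoundedLT (Fin m) := inferInstance
  have h1 : i ≤ q i := h.le_apply
  have h2 : i ≤ q⁻¹ i := hinv.le_apply
  have h3 : q i ≤ q (q⁻¹ i) := h.monotone h2
  simp only [← Equiv.Perm.mul_apply, mul_inv_cancel, Equiv.Perm.one_apply] at h3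
  exact le_antisymm h3 h1

lemma Φ_injective : Function.Injective (Φ (n := n)) := by
  rintro ⟨⟨σ₁, hσ₁⟩, p₁, s₁⟩ ⟨⟨σ₂, hσ₂⟩, p₂, s₂⟩ h
  rw [mem_pairS] at hσ₁ hσ₂
  have hev : ∀ i, σ₁ (ψ p₁ s₁ (ev n i)) = σ₂ (ψ p₂ s₂ (ev n i)) := by
    intro i
    have := congrArg (fun ρ => ρ (ev n i)) h
    simpa [Φ, Equiv.Perm.mul_apply] using this
  have hod : ∀ i, σ₁ (ψ p₁ s₁ (od n i)) = σ₂ (ψ p₂ s₂ (od n i)) := by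
    intro i
    have := congrArg (fun ρ => ρ (od n i)) h
    simpa [Φ, Equiv.Perm.mul_apply] using this
  -- s₁ = s₂
  have hs : s₁ = s₂ := by
    funext i
    have he := hev i; have ho := hod i
    rw [ψ_ev, ψ_ev] at he
    rw [ψ_od, ψ_od] at ho
    cases h1 : s₁ i <;> cases h2 : s₂ i <;>
      simp [h1, h2] at he ho
    · rfl
    · exfalso
      have a1 := hσ₁.1 (p₁ i)
      rw [he, ho] at a1
      exact lt_asymm a1 (hσ₂.1 (p₂ i))
    · exfalso
      have a1 := hσ₁.1 (p₁ i)
      rw [ho, he] at a1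
      exact lt_asymm a1 (hσ₂.1 (p₂ i))
    · rfl
  subst hs
  -- both ev and od transported equalities
  have hev' : ∀ i, σ₁ (ev n (p₁ i)) = σ₂ (ev n (p₂ i)) := by
    intro i
    have he := hev i; have ho := hod i
    rw [ψ_ev, ψ_ev] at he; rw [ψ_od, ψ_od] at ho
    cases h1 : s₁ i <;> simp only [h1, if_true, if_false] at he ho
    · exact he
    · exact ho
  have hod' : ∀ i, σ₁ (od n (p₁ i)) = σ₂ (od n (p₂ i)) := by
    intro i
    have he := hev i; have ho := hod i
    rw [ψ_ev, ψ_ev] at he; rw [ψ_od, ψ_od] at ho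
    cases h1 : s₁ i <;> simp only [h1, if_true, if_false] at he ho
    · exact ho
    · exact he
  -- q = p₂ * p₁⁻¹ is strictly monotone
  have hq : StrictMono ((p₂ * p₁⁻¹ : Equiv.Perm (Fin n)) : Fin n → Fin n) := by
    intro i j hij
    have h1 : σ₁ (ev n i) < σ₁ (ev n j) := hσ₁.2 i j hij
    have e1 : σ₁ (ev n i) = σ₂ (ev n (p₂ (p₁⁻¹ i))) := by
      have := hev' (p₁⁻¹ i); simpa using this
    have e2 : σ₁ (ev n j) = σ₂ (ev n (p₂ (p₁⁻¹ j))) := by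
      have := hev' (p₁⁻¹ j); simpa using this
    rw [e1, e2] at h1
    by_contra hle
    push_neg at hle
    rcases lt_or_eq_of_le hle with h' | h'
    · exact absurd (hσ₂.2 _ _ h') (not_lt.2 h1.le)
    · have : p₂ (p₁⁻¹ j) = p₂ (p₁⁻¹ i) := by
        simpa [Equiv.Perm.mul_apply] using h'
      rw [this] at h1
      exact lt_irrefl _ h1
  have hq1 : p₂ * p₁⁻¹ = 1 := strictMono_perm_eq_one hq
  have hp : p₁ = p₂ := by
    have := mul_inv_eq_one.mp hq1
    exact this.symm
  subst hp
  have hσ : σ₁ = σ₂ := by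
    ext k
    obtain ⟨⟨i, b⟩, rfl⟩ := (E n).surjective k
    have hb2 : b = 0 ∨ b = 1 := by omega
    rcases hb2 with rfl | rfl
    · rw [E_apply_zero]
      exact congrArg Fin.val (by simpa using hev' (p₁⁻¹ i))
    · rw [E_apply_one]
      exact congrArg Fin.val (by simpa using hod' (p₁⁻¹ i))
  simp [Prod.ext_iff, Subtype.ext_iff, hσ]
open PFAux
variable {n : ℕ}

lemma flip2_flip2 (c : Bool) (b : Fin 2) : flip2 c (flip2 c b) = b := by
  cases c <;> simp [flip2]

lemma ψ_inv_apply_E (p : Equiv.Perm (Fin n)) (s : Fin n → Bool) (j : Fin n) (b : Fin 2) :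
    (ψ p s)⁻¹ (E n (j, b)) = E n (p⁻¹ j, flip2 (s (p⁻¹ j)) b) := by
  rw [Equiv.Perm.inv_eq_iff_eq]
  rw [ψ_apply_E]
  simp [flip2_flip2]

lemma ev_ne_od (i j : Fin n) : ev n i ≠ od n j := by
  simp [ev, od, Fin.ext_iff]; omega

lemma ev_inj {i j : Fin n} (h : ev n i = ev n j) : i = j := by
  simpa [ev, Fin.ext_iff] using h

lemma od_inj {i j : Fin n} (h : od n i = od n j) : i = j := by
  simpa [od, Fin.ext_iff] using h

lemma Φ_surjective : Function.Surjective (Φ (n := n)) := by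
  intro ρ
  set s : Fin n → Bool := fun i => decide (ρ (od n i) < ρ (ev n i)) with hs
  set f : Fin n → Fin (2 * n) := fun i => if s i then ρ (od n i) else ρ (ev n i) with hf
  have hfmem : ∀ i, (f i = ρ (ev n i) ∨ f i = ρ (od n i)) := by
    intro i; cases h : s i <;> simp [hf, h]
  have hflt : ∀ i, (if s i then ρ (ev n i) else ρ (od n i)) > f i := by
    intro i
    cases h : s i <;> simp only [hf, h, if_true, if_false, gt_iff_lt]
    · have : ¬ (ρ (od n i) < ρ (ev n i)) := by
        simpa [hs] using h
      rcases lt_or_eq_of_le (not_lt.1 this) with h' | h'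
      · exact h'
      · exact absurd (ρ.injective h') (ev_ne_od i i)
    · simpa [hs] using h
  have hfinj : Function.Injective f := by
    intro i j hij
    rcases hfmem i with h1 | h1 <;> rcases hfmem j with h2 | h2 <;>
      rw [h1, h2] at hij <;> have := ρ.injective hij
    · exact ev_inj this
    · exact absurd this (ev_ne_od i j)
    · exact absurd this.symm (ev_ne_od j i)
    · exact od_inj this
  set q := Tuple.sort f with hq
  have hmono : StrictMono (f ∘ q) :=
    (Tuple.monotone_sort f).strictMono_of_injective (hfinj.comp q.injective)
  have hσev : ∀ j : Fin n, (ρ * (ψ q⁻¹ s)⁻¹) (ev n j) = f (q j) := by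
    intro j
    rw [Equiv.Perm.mul_apply, ← E_apply_zero, ψ_inv_apply_E]
    simp only [inv_inv]
    cases h : s (q j) <;> simp [flip2, h, E_apply_zero, E_apply_one, hf]
  have hσod : ∀ j : Fin n, (ρ * (ψ q⁻¹ s)⁻¹) (od n j) =
      (if s (q j) then ρ (ev n (q j)) else ρ (od n (q j))) := by
    intro j
    rw [Equiv.Perm.mul_apply, ← E_apply_one, ψ_inv_apply_E]
    simp only [inv_inv]
    cases h : s (q j) <;> simp [flip2, h, E_apply_zero, E_apply_one]
  have hmem : ρ * (ψ q⁻¹ s)⁻¹ ∈ pairS n := by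
    rw [mem_pairS]
    constructor
    · intro i
      rw [hσev, hσod]
      exact hflt (q i)
    · intro i j hij
      rw [hσev, hσev]
      exact hmono hij
  refine ⟨⟨⟨ρ * (ψ q⁻¹ s)⁻¹, hmem⟩, q⁻¹, s⟩, ?_⟩
  simp [Φ]


lemma Φ_bijective (n : ℕ) : Function.Bijective (Φ (n := n)) := ⟨Φ_injective, Φ_surjective⟩

noncomputable def signC {m : ℕ} (σ : Equiv.Perm (Fin m)) : ℂ := ((Equiv.Perm.sign σ : ℤ) : ℂ)

lemma pf_eq (A : Matrix (Fin (2 * n)) (Fin (2 * n)) ℂ) :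
    pf A = ∑ σ ∈ pairS n, signC σ * ∏ i, A (σ (ev n i)) (σ (od n i)) := by
  unfold pf pairS signC ev od
  apply Finset.sum_congr rfl
  intro σ _
  rw [zsmul_eq_mul]

lemma prod_flip_sq (s : Fin n → Bool) :
    (∏ i, (if s i then (-1 : ℂ) else 1)) * (∏ i, (if s i then (-1 : ℂ) else 1)) = 1 := by
  rw [← Finset.prod_mul_distrib]
  apply Finset.prod_eq_one
  intro i _
  cases h : s i <;> norm_num

lemma signC_mul {m : ℕ} (σ τ : Equiv.Perm (Fin m)) : signC (σ * τ) = signC σ * signC τ := by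
  unfold signC
  rw [_root_.map_mul]
  push_cast
  ring

lemma signC_ψ (p : Equiv.Perm (Fin n)) (s : Fin n → Bool) :
    signC (ψ p s) = ∏ i, (if s i then (-1 : ℂ) else 1) := by
  unfold signC
  rw [sign_ψ]
  rw [show ((((∏ i, (if s i then (-1 : ℤˣ) else 1)) : ℤˣ) : ℤ) : ℂ)
      = ∏ i, ((((if s i then (-1 : ℤˣ) else 1) : ℤˣ) : ℤ) : ℂ) by push_cast; ring]
  apply Finset.prod_congr rfl
  intro i _
  cases h : s i <;> norm_num

lemma invariance (Mat : Matrix (Fin (2 * n)) (Fin (2 * n)) ℂ)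
    (hanti : ∀ a b, Mat a b = - Mat b a)
    (σ : Equiv.Perm (Fin (2 * n))) (p : Equiv.Perm (Fin n)) (s : Fin n → Bool) :
    signC (σ * ψ p s) * ∏ i, Mat ((σ * ψ p s) (ev n i)) ((σ * ψ p s) (od n i))
      = signC σ * ∏ i, Mat (σ (ev n i)) (σ (od n i)) := by
  have hprod : ∏ i, Mat ((σ * ψ p s) (ev n i)) ((σ * ψ p s) (od n i))
      = (∏ i, (if s i then (-1 : ℂ) else 1)) * ∏ i, Mat (σ (ev n i)) (σ (od n i)) := by
    calc ∏ i, Mat ((σ * ψ p s) (ev n i)) ((σ * ψ p s) (od n i))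
        = ∏ i, ((if s i then (-1 : ℂ) else 1) * Mat (σ (ev n (p i))) (σ (od n (p i)))) := by
          apply Finset.prod_congr rfl
          intro i _
          rw [Equiv.Perm.mul_apply, Equiv.Perm.mul_apply, ψ_ev, ψ_od]
          cases h : s i
          · simp
          · simp only [if_true]
            rw [hanti (σ (od n (p i))) (σ (ev n (p i)))]
            ring
      _ = (∏ i, (if s i then (-1 : ℂ) else 1)) * ∏ i, Mat (σ (ev n (p i))) (σ (od n (p i))) :=
          Finset.prod_mul_distrib
      _ = (∏ i, (if s i then (-1 : ℂ) else 1)) * ∏ j, Mat (σ (ev n j)) (σ (od n j)) := by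
          rw [Equiv.prod_comp p (fun j => Mat (σ (ev n j)) (σ (od n j)))]
  rw [hprod, signC_mul, signC_ψ]
  have := prod_flip_sq s
  calc signC σ * (∏ i, (if s i then (-1:ℂ) else 1)) *
        ((∏ i, (if s i then (-1:ℂ) else 1)) * ∏ i, Mat (σ (ev n i)) (σ (od n i)))
      = signC σ * (((∏ i, (if s i then (-1:ℂ) else 1)) * (∏ i, (if s i then (-1:ℂ) else 1)))
          * ∏ i, Mat (σ (ev n i)) (σ (od n i))) := by ring
    _ = signC σ * ∏ i, Mat (σ (ev n i)) (σ (od n i)) := by rw [this, one_mul]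

lemma sum_perm (Mat : Matrix (Fin (2 * n)) (Fin (2 * n)) ℂ)
    (hanti : ∀ a b, Mat a b = - Mat b a) :
    ∑ ρ : Equiv.Perm (Fin (2 * n)), signC ρ * ∏ i, Mat (ρ (ev n i)) (ρ (od n i))
      = ((n.factorial * 2 ^ n : ℕ) : ℂ) * pf Mat := by
  rw [← Fintype.sum_bijective (Φ (n := n)) (Φ_bijective n)
    (fun x => signC (Φ x) * ∏ i, Mat ((Φ x) (ev n i)) ((Φ x) (od n i)))
    (fun ρ => signC ρ * ∏ i, Mat (ρ (ev n i)) (ρ (od n i))) (fun x => rfl)]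
  have hterm : ∀ x : {σ // σ ∈ pairS n} × Equiv.Perm (Fin n) × (Fin n → Bool),
      signC (Φ x) * ∏ i, Mat ((Φ x) (ev n i)) ((Φ x) (od n i))
        = signC (x.1 : Equiv.Perm (Fin (2 * n)))
            * ∏ i, Mat ((x.1 : Equiv.Perm (Fin (2*n))) (ev n i))
                ((x.1 : Equiv.Perm (Fin (2*n))) (od n i)) := by
    rintro ⟨σ, p, s⟩
    exact invariance Mat hanti σ p s
  rw [Fintype.sum_congr _ _ hterm]
  rw [Fintype.sum_prod_type]
  have : ∀ σh : {σ // σ ∈ pairS n},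
      ∑ _x : Equiv.Perm (Fin n) × (Fin n → Bool),
        (signC (σh : Equiv.Perm (Fin (2*n)))
          * ∏ i, Mat ((σh : Equiv.Perm (Fin (2*n))) (ev n i))
              ((σh : Equiv.Perm (Fin (2*n))) (od n i)))
      = ((n.factorial * 2 ^ n : ℕ) : ℂ) * (signC (σh : Equiv.Perm (Fin (2*n)))
          * ∏ i, Mat ((σh : Equiv.Perm (Fin (2*n))) (ev n i))
              ((σh : Equiv.Perm (Fin (2*n))) (od n i))) := by
    intro σh
    rw [Finset.sum_const, Finset.card_univ, nsmul_eq_mul]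
    congr 1
    simp [Fintype.card_prod, Fintype.card_perm, Fintype.card_fun, Fintype.card_fin]
  simp only [this]
  rw [← Finset.mul_sum]
  congr 1
  rw [pf_eq]
  exact Finset.sum_coe_sort (pairS n)
    (fun σ => signC σ * ∏ i, Mat (σ (ev n i)) (σ (od n i)))

lemma card_mul : (pairS n).card * (n.factorial * 2 ^ n) = (2 * n).factorial := by
  have := Fintype.card_of_bijective (Φ_bijective n)
  simp only [Fintype.card_prod, Fintype.card_coe, Fintype.card_perm, Fintype.card_fun,
    Fintype.card_fin, Fintype.card_bool] at this
  rw [← this]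


variable {X : Type*} [MeasurableSpace X] (μ : Measure X) [IsFiniteMeasure μ]

lemma pair_integrable {f g : X → ℂ} (hf : Integrable f μ) (hg : Integrable g μ)
    {ε : X → X → ℂ} (hεmeas : Measurable (Function.uncurry ε)) {Cb : ℝ}
    (hεbd : ∀ x y, ‖ε x y‖ ≤ Cb) :
    Integrable (fun z : X × X => f z.1 * ε z.1 z.2 * g z.2) (μ.prod μ) := by
  have h1 : Integrable (fun z : X × X => f z.1 * g z.2) (μ.prod μ) := hf.mul_prod hg
  have h2 : AEStronglyMeasurable (fun z : X × X => ε z.1 z.2) (μ.prod μ) :=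
    hεmeas.aestronglyMeasurable
  have h3 := h1.bdd_mul (c := Cb) h2 (Filter.Eventually.of_forall fun z => hεbd z.1 z.2)
  have : (fun z : X × X => f z.1 * ε z.1 z.2 * g z.2)
      = fun z : X × X => ε z.1 z.2 * (f z.1 * g z.2) := by funext z; ring
  rw [this]
  exact h3

def eo (n : ℕ) : Fin n ⊕ Fin n ≃ Fin (2 * n) where
  toFun := Sum.elim (ev n) (od n)
  invFun k := if _h : (k : ℕ) % 2 = 0 then Sum.inl ⟨k / 2, by have := k.isLt; omega⟩
    else Sum.inr ⟨k / 2, by have := k.isLt; omega⟩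
  left_inv := by
    rintro (i | i) <;> dsimp only [Sum.elim_inl, Sum.elim_inr, ev, od]
    · rw [dif_pos (by omega)]
      simp only [Sum.inl.injEq, Fin.ext_iff]
      omega
    · rw [dif_neg (by omega)]
      simp only [Sum.inr.injEq, Fin.ext_iff]
      omega
  right_inv := by
    intro k
    have hk := k.isLt
    dsimp only
    by_cases h : (k : ℕ) % 2 = 0
    · rw [dif_pos h]
      dsimp only [Sum.elim_inl, ev]
      simp only [Fin.ext_iff]
      omega
    · rw [dif_neg h]
      dsimp only [Sum.elim_inr, od]
      simp only [Fin.ext_iff]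
      omega

lemma eo_inl (i : Fin n) : eo n (Sum.inl i) = ev n i := rfl
lemma eo_inr (i : Fin n) : eo n (Sum.inr i) = od n i := rfl

lemma pair_integral (g : Fin n → X → X → ℂ) :
    ∫ y : Fin (2 * n) → X, ∏ i, g i (y (ev n i)) (y (od n i)) ∂(Measure.pi fun _ => μ)
      = ∏ i, ∫ z : X × X, g i z.1 z.2 ∂(μ.prod μ) := by
  letI : MeasureSpace X := ⟨μ⟩
  have hvol : (Measure.pi fun _ : Fin (2 * n) => μ) = (volume : Measure (Fin (2*n) → X)) := rfl
  rw [hvol]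
  have s1 := (measurePreserving_piCongrLeft (fun _ : Fin (2 * n) => μ) (eo n)).integral_comp'
    (fun y => ∏ i, g i (y (ev n i)) (y (od n i)))
  rw [show (Measure.pi fun i : Fin (2*n) => μ) = (volume : Measure (Fin (2*n) → X)) from rfl] at s1
  rw [← s1]
  have s2 := (measurePreserving_sumPiEquivProdPi_symm
      (fun _ : Fin n ⊕ Fin n => μ)).integral_comp'
    (fun h : Fin n ⊕ Fin n → X =>
      ∏ i, g i ((MeasurableEquiv.piCongrLeft (fun _ => X) (eo n) h) (ev n i))
        ((MeasurableEquiv.piCongrLeft (fun _ => X) (eo n) h) (od n i)))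
  rw [← s2]
  have s3 := (measurePreserving_arrowProdEquivProdArrow X X (Fin n)
      (fun _ => μ) (fun _ => μ)).integral_comp'
    (fun uv : (Fin n → X) × (Fin n → X) =>
      ∏ i, g i ((MeasurableEquiv.piCongrLeft (fun _ => X) (eo n)
          ((MeasurableEquiv.sumPiEquivProdPi (fun _ : Fin n ⊕ Fin n => X)).symm uv)) (ev n i))
        ((MeasurableEquiv.piCongrLeft (fun _ => X) (eo n)
          ((MeasurableEquiv.sumPiEquivProdPi (fun _ : Fin n ⊕ Fin n => X)).symm uv)) (od n i)))
  rw [← s3]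
  have hpt : ∀ w : Fin n → X × X,
      (∏ i, g i ((MeasurableEquiv.piCongrLeft (fun _ => X) (eo n)
          ((MeasurableEquiv.sumPiEquivProdPi (fun _ : Fin n ⊕ Fin n => X)).symm
            ((MeasurableEquiv.arrowProdEquivProdArrow X X (Fin n)) w))) (ev n i))
        ((MeasurableEquiv.piCongrLeft (fun _ => X) (eo n)
          ((MeasurableEquiv.sumPiEquivProdPi (fun _ : Fin n ⊕ Fin n => X)).symm
            ((MeasurableEquiv.arrowProdEquivProdArrow X X (Fin n)) w))) (od n i)))
      = ∏ i, g i (w i).1 (w i).2 := by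
    intro w
    apply Finset.prod_congr rfl
    intro i _
    rw [← eo_inl, ← eo_inr,
      MeasurableEquiv.piCongrLeft_apply_apply, MeasurableEquiv.piCongrLeft_apply_apply]
    rfl
  simp only [hpt]
  have s4 : ∫ w : Fin n → X × X, ∏ i, g i (w i).1 (w i).2 ∂(Measure.pi fun _ => μ.prod μ)
      = ∏ i, ∫ z : X × X, g i z.1 z.2 ∂(μ.prod μ) := by
    exact MeasureTheory.integral_fintype_prod_eq_prod (fun i (z : X × X) => g i z.1 z.2)
  exact s4

lemma term_integrable (φf : Fin (2 * n) → X → ℂ) (hφf : ∀ k, Integrable (φf k) μ)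
    {ε : X → X → ℂ} (hεmeas : Measurable (Function.uncurry ε)) {Cb : ℝ}
    (hεbd : ∀ x y, ‖ε x y‖ ≤ Cb) (a b : Fin n → Fin (2 * n)) :
    Integrable (fun x : Fin (2 * n) → X =>
      (∏ i, ε (x (a i)) (x (b i))) * ∏ k, φf k (x k)) (Measure.pi fun _ => μ) := by
  letI : MeasureSpace X := ⟨μ⟩
  have h1 : Integrable (fun x : Fin (2 * n) → X => ∏ k, φf k (x k))
      (Measure.pi fun _ => μ) := by
    have := MeasureTheory.Integrable.fintype_prod (f := φf) hφf
    exact this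
  have h2 : Measurable (fun x : Fin (2 * n) → X => ∏ i, ε (x (a i)) (x (b i))) := by
    apply Finset.measurable_prod
    intro i _
    have hm : Measurable fun x : Fin (2 * n) → X => (x (a i), x (b i)) :=
      (measurable_pi_apply _).prodMk (measurable_pi_apply _)
    exact hεmeas.comp hm
  apply h1.bdd_mul (c := Cb ^ n) h2.aestronglyMeasurable
  refine Filter.Eventually.of_forall fun x => ?_
  rw [norm_prod]
  calc ∏ i, ‖ε (x (a i)) (x (b i))‖ ≤ ∏ _i : Fin n, Cb := by
        apply Finset.prod_le_prod (fun i _ => norm_nonneg _) (fun i _ => hεbd _ _)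
    _ = Cb ^ n := by simp
end PFAux

open Equiv PFAux in
theorem partition_function {X : Type*} [MeasurableSpace X] (μ : Measure X) [IsFiniteMeasure μ]
    {n : ℕ} (φ : Fin (2 * n) → X → ℂ) (hφ : ∀ j, Integrable (φ j) μ)
    (ε : X → X → ℂ) (hεmeas : Measurable (Function.uncurry ε))
    (hεbd : ∃ Cb : ℝ, ∀ x y, ‖ε x y‖ ≤ Cb)
    (hεanti : ∀ x y, ε x y = -ε y x)
    (M : Matrix (Fin (2 * n)) (Fin (2 * n)) ℂ)
    (hM : ∀ j k, M j k = ∫ x, ∫ y, φ j x * ε x y * φ k y ∂μ ∂μ) :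
    ∫ x : Fin (2 * n) → X,
        (Matrix.det (Matrix.of fun j k => φ j (x k))) * pf (Matrix.of fun j k => ε (x j) (x k))
        ∂(Measure.pi fun _ => μ) =
      ((2 * n).factorial : ℂ) * pf M := by
  classical
  obtain ⟨Cb, hCb⟩ := hεbd
  have hM' : ∀ j k, M j k = ∫ z : X × X, φ j z.1 * ε z.1 z.2 * φ k z.2 ∂(μ.prod μ) := by
    intro j k
    rw [hM j k, MeasureTheory.integral_prod _ (pair_integrable μ (hφ j) (hφ k) hεmeas hCb)]
  have hanti : ∀ j k, M j k = - M k j := by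
    intro j k
    have h1 := MeasureTheory.integral_prod_swap (μ := μ) (ν := μ)
      (fun z : X × X => φ j z.1 * ε z.1 z.2 * φ k z.2)
    rw [hM' j k, ← h1]
    simp only [Prod.fst_swap, Prod.snd_swap]
    rw [show (fun z : X × X => φ j z.2 * ε z.2 z.1 * φ k z.1)
        = fun z : X × X => -(φ k z.1 * ε z.1 z.2 * φ j z.2) from
      funext fun z => by rw [hεanti z.2 z.1]; ring]
    rw [integral_neg, hM' k j]
  -- key integral computation for a fixed pair of permutations
  have key : ∀ σ τ : Equiv.Perm (Fin (2 * n)),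
      ∫ x : Fin (2 * n) → X,
          (∏ i, ε (x (σ (ev n i))) (x (σ (od n i)))) * ∏ k, φ (τ k) (x k)
          ∂(Measure.pi fun _ => μ)
        = ∏ i, M ((τ * σ) (ev n i)) ((τ * σ) (od n i)) := by
    intro σ τ
    have cv := (measurePreserving_piCongrLeft (fun _ : Fin (2 * n) => μ)
        (σ : Fin (2 * n) ≃ Fin (2 * n))).integral_comp'
      (fun x : Fin (2 * n) → X =>
        (∏ i, ε (x (σ (ev n i))) (x (σ (od n i)))) * ∏ k, φ (τ k) (x k))
    rw [← cv]
    have hpt2 : ∀ y : Fin (2 * n) → X,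
        (∏ i, ε (((MeasurableEquiv.piCongrLeft (fun _ => X)
              (σ : Fin (2 * n) ≃ Fin (2 * n))) y) (σ (ev n i)))
            (((MeasurableEquiv.piCongrLeft (fun _ => X)
              (σ : Fin (2 * n) ≃ Fin (2 * n))) y) (σ (od n i)))) *
          ∏ k, φ (τ k) (((MeasurableEquiv.piCongrLeft (fun _ => X)
              (σ : Fin (2 * n) ≃ Fin (2 * n))) y) k)
        = ∏ i, (φ ((τ * σ) (ev n i)) (y (ev n i)) * ε (y (ev n i)) (y (od n i)) *
            φ ((τ * σ) (od n i)) (y (od n i))) := by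
      intro y
      have hεpart : ∀ i : Fin n,
          ε (((MeasurableEquiv.piCongrLeft (fun _ => X)
              (σ : Fin (2 * n) ≃ Fin (2 * n))) y) (σ (ev n i)))
            (((MeasurableEquiv.piCongrLeft (fun _ => X)
              (σ : Fin (2 * n) ≃ Fin (2 * n))) y) (σ (od n i)))
          = ε (y (ev n i)) (y (od n i)) := by
        intro i
        rw [MeasurableEquiv.piCongrLeft_apply_apply, MeasurableEquiv.piCongrLeft_apply_apply]
      have hφpart : ∏ k, φ (τ k) (((MeasurableEquiv.piCongrLeft (fun _ => X)
              (σ : Fin (2 * n) ≃ Fin (2 * n))) y) k)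
          = ∏ k, φ ((τ * σ) k) (y k) := by
        rw [← Equiv.prod_comp (σ : Fin (2 * n) ≃ Fin (2 * n))
          (fun k => φ (τ k) (((MeasurableEquiv.piCongrLeft (fun _ => X)
              (σ : Fin (2 * n) ≃ Fin (2 * n))) y) k))]
        apply Finset.prod_congr rfl
        intro k _
        rw [MeasurableEquiv.piCongrLeft_apply_apply]
        rfl
      have hgroup : ∏ k, φ ((τ * σ) k) (y k)
          = ∏ i, (φ ((τ * σ) (ev n i)) (y (ev n i)) * φ ((τ * σ) (od n i)) (y (od n i))) := by
        rw [← Equiv.prod_comp (E n) (fun k => φ ((τ * σ) k) (y k))]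
        rw [Fintype.prod_prod_type]
        apply Finset.prod_congr rfl
        intro i _
        rw [Fin.prod_univ_two, E_apply_zero, E_apply_one]
      simp only [hεpart]
      rw [hφpart, hgroup, ← Finset.prod_mul_distrib]
      apply Finset.prod_congr rfl
      intro i _
      ring
    simp only [hpt2]
    rw [pair_integral μ (fun i u v =>
      φ ((τ * σ) (ev n i)) u * ε u v * φ ((τ * σ) (od n i)) v)]
    apply Finset.prod_congr rfl
    intro i _
    exact (hM' _ _).symm
  -- pointwise expansion of the integrand
  have hpt : (fun x : Fin (2 * n) → X =>
      (Matrix.det (Matrix.of fun j k => φ j (x k))) * pf (Matrix.of fun j k => ε (x j) (x k)))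
      = fun x => ∑ σ ∈ pairS n, ∑ τ : Equiv.Perm (Fin (2 * n)),
          (signC τ * signC σ) *
            ((∏ i, ε (x (σ (ev n i))) (x (σ (od n i)))) * ∏ k, φ (τ k) (x k)) := by
    funext x
    rw [Matrix.det_apply, pf_eq, Finset.sum_mul_sum, Finset.sum_comm]
    apply Finset.sum_congr rfl
    intro σ _
    apply Finset.sum_congr rfl
    intro τ _
    simp only [Matrix.of_apply, Units.smul_def, zsmul_eq_mul, signC]
    ring
  rw [hpt]
  rw [integral_finset_sum _ (fun σ _ => integrable_finset_sum _ (fun τ _ =>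
    ((term_integrable μ (fun k => φ (τ k)) (fun k => hφ (τ k)) hεmeas hCb
      (fun i => σ (ev n i)) (fun i => σ (od n i))).const_mul _)))]
  have h2 : ∀ σ ∈ pairS n,
      ∫ x : Fin (2 * n) → X, ∑ τ : Equiv.Perm (Fin (2 * n)),
          (signC τ * signC σ) *
            ((∏ i, ε (x (σ (ev n i))) (x (σ (od n i)))) * ∏ k, φ (τ k) (x k))
          ∂(Measure.pi fun _ => μ)
        = ((n.factorial * 2 ^ n : ℕ) : ℂ) * pf M := by
    intro σ hσ
    rw [integral_finset_sum _ (fun τ _ =>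
      ((term_integrable μ (fun k => φ (τ k)) (fun k => hφ (τ k)) hεmeas hCb
        (fun i => σ (ev n i)) (fun i => σ (od n i))).const_mul _))]
    have h3 : ∀ τ : Equiv.Perm (Fin (2 * n)),
        ∫ x : Fin (2 * n) → X,
            (signC τ * signC σ) *
              ((∏ i, ε (x (σ (ev n i))) (x (σ (od n i)))) * ∏ k, φ (τ k) (x k))
            ∂(Measure.pi fun _ => μ)
          = signC (τ * σ) * ∏ i, M ((τ * σ) (ev n i)) ((τ * σ) (od n i)) := by
      intro τ
      rw [MeasureTheory.integral_const_mul, key σ τ, signC_mul]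
    rw [Finset.sum_congr rfl (fun τ _ => h3 τ)]
    rw [← sum_perm M hanti]
    exact (Fintype.sum_bijective (Equiv.mulRight σ) (Equiv.bijective _)
      (fun τ => signC (τ * σ) * ∏ i, M ((τ * σ) (ev n i)) ((τ * σ) (od n i)))
      (fun ρ => signC ρ * ∏ i, M (ρ (ev n i)) (ρ (od n i)))
      (fun τ => rfl))
  rw [Finset.sum_congr rfl h2, Finset.sum_const, nsmul_eq_mul, ← mul_assoc, ← Nat.cast_mul,
    card_mul]
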